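/- Let K ⊂ ℝ^m be compact with nonempty interior, let μ be a finite Borel measure on ℝ^m with support equal to K, and let f : ℝ^m → ℝ be a polynomial. For each r ∈ ℕ define f_K^{(r)} := sup over all SOS densities h of degree 2r (with respect to μ) of ∫_K f(z) h(z) dμ(z). Then lim_{r→∞} f_K^{(r)} = max_{z∈K} f(z); i.e., in the limit the worst-case expectation over SOS polynomial densities recovers the usual robust counterpart value. -/

import Mathlib

open MeasureTheory MvPolynomial

noncomputable section

/-- A polynomial is a sum of squares of polynomials each of total degree at most `r`
(hence itself of degree at most `2r`). -/
def IsSOS {m : ℕ} (r : ℕ) (h : MvPolynomial (Fin m) ℝ) : Prop :=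
  ∃ (N : ℕ) (q : Fin N → MvPolynomial (Fin m) ℝ),
    h = ∑ j, q j ^ 2 ∧ ∀ j, (q j).totalDegree ≤ r

/-- The (closed) support of the measure `μ` is exactly `K`. -/
def HasSupport {m : ℕ} (μ : Measure (Fin m → ℝ)) (K : Set (Fin m → ℝ)) : Prop :=
  μ Kᶜ = 0 ∧ ∀ U : Set (Fin m → ℝ), IsOpen U → (U ∩ K).Nonempty → 0 < μ U

private lemma sos_eval_nonneg' {m r : ℕ} {h : MvPolynomial (Fin m) ℝ} (hh : IsSOS r h)
    (z : Fin m → ℝ) : 0 ≤ eval z h := by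
  obtain ⟨N, q, rfl, -⟩ := hh
  simp only [map_sum, map_pow]
  exact Finset.sum_nonneg fun j _ => sq_nonneg _

private lemma isSOS_mono' {m r r' : ℕ} (hrr : r ≤ r') {h : MvPolynomial (Fin m) ℝ}
    (hh : IsSOS r h) : IsSOS r' h := by
  obtain ⟨N, q, hq, hd⟩ := hh
  exact ⟨N, q, hq, fun j => (hd j).trans hrr⟩

/-- as `r → ∞`, the worst-case expectation of a polynomial `f` over SOS
densities of degree `2r` converges to the maximum of `f` on the compact set `K`. -/
theorem sos_worst_case_tendsto_max
    {m : ℕ} (K : Set (Fin m → ℝ)) (hK : IsCompact K) (hKint : (interior K).Nonempty)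
    (μ : Measure (Fin m → ℝ)) [IsFiniteMeasure μ] (hsupp : HasSupport μ K)
    (f : MvPolynomial (Fin m) ℝ)
    (fK : ℕ → ℝ)
    (hfK : ∀ r, fK r = sSup {v : ℝ | ∃ h : MvPolynomial (Fin m) ℝ,
      IsSOS r h ∧ (∫ z in K, eval z h ∂μ) = 1 ∧
      v = ∫ z in K, eval z f * eval z h ∂μ}) :
    Filter.Tendsto fK Filter.atTop (nhds (sSup ((fun z => eval z f) '' K))) := by
  classical
  obtain ⟨x0, hx0⟩ := hKint
  have hx0K : x0 ∈ K := interior_subset hx0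
  have hKne : K.Nonempty := ⟨x0, hx0K⟩
  set F : (Fin m → ℝ) → ℝ := fun z => eval z f with hFdef
  have hFc : Continuous F := MvPolynomial.continuous_eval f
  obtain ⟨z0, hz0K, hz0max⟩ := hK.exists_isMaxOn hKne hFc.continuousOn
  set M : ℝ := F z0 with hMdef
  have hle : ∀ z ∈ K, F z ≤ M := fun z hz => hz0max hz
  have hsSup : sSup ((fun z => eval z f) '' K) = M := by
    apply IsGreatest.csSup_eq
    exact ⟨⟨z0, hz0K, rfl⟩, by rintro _ ⟨z, hz, rfl⟩; exact hle z hz⟩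
  rw [hsSup]
  -- measure facts
  have hμKc : μ Kᶜ = 0 := hsupp.1
  have hμeq : ∀ s : Set (Fin m → ℝ), μ (s ∩ K) = μ s := by
    intro s
    refine le_antisymm (measure_mono Set.inter_subset_left) ?_
    calc μ s ≤ μ ((s ∩ K) ∪ Kᶜ) := measure_mono (fun x hx => by
          by_cases h : x ∈ K
          · exact Or.inl ⟨hx, h⟩
          · exact Or.inr h)
      _ ≤ μ (s ∩ K) + μ Kᶜ := measure_union_le _ _
      _ = μ (s ∩ K) := by rw [hμKc, add_zero]
  have hμK_pos : 0 < μ K := by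
    have h1 := hsupp.2 Set.univ isOpen_univ (by simpa using hKne)
    have h2 : μ K = μ Set.univ := by rw [← hμeq Set.univ, Set.univ_inter]
    rw [h2]; exact h1
  have hμK_toReal : 0 < (μ K).toReal :=
    ENNReal.toReal_pos hμK_pos.ne' (measure_ne_top μ K)
  -- integrability of polynomial functions on K
  have hint : ∀ p : MvPolynomial (Fin m) ℝ, IntegrableOn (fun z => eval z p) K μ :=
    fun p => (MvPolynomial.continuous_eval p).continuousOn.integrableOn_compact hK
  -- the feasible value sets
  set S : ℕ → Set ℝ := fun r => {v : ℝ | ∃ h : MvPolynomial (Fin m) ℝ,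
      IsSOS r h ∧ (∫ z in K, eval z h ∂μ) = 1 ∧
      v = ∫ z in K, eval z f * eval z h ∂μ} with hSdef
  have hfK' : ∀ r, fK r = sSup (S r) := hfK
  -- upper bound
  have hub : ∀ r, ∀ v ∈ S r, v ≤ M := by
    rintro r v ⟨h, hh, hnorm, rfl⟩
    have h1 : IntegrableOn (fun z => eval z f * eval z h) K μ := by
      have := hint (f * h)
      simpa only [map_mul] using this
    have h2 : IntegrableOn (fun z => M * eval z h) K μ := (hint h).const_mul M
    calc ∫ z in K, eval z f * eval z h ∂μ ≤ ∫ z in K, M * eval z h ∂μ :=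
          setIntegral_mono_on h1 h2 hK.measurableSet (fun z hz =>
            mul_le_mul_of_nonneg_right (hle z hz) (sos_eval_nonneg' hh z))
      _ = M := by rw [integral_const_mul, hnorm, mul_one]
  have hbdd : ∀ r, BddAbove (S r) := fun r => ⟨M, fun v hv => hub r v hv⟩
  -- nonemptiness: the constant density
  have hSne : ∀ r, (S r).Nonempty := by
    intro r
    set a : ℝ := Real.sqrt ((μ K).toReal)⁻¹ with ha
    have ha2 : a ^ 2 = ((μ K).toReal)⁻¹ := Real.sq_sqrt (inv_nonneg.2 hμK_toReal.le)
    refine ⟨_, (C a) ^ 2, ⟨1, fun _ => C a, by simp, fun j => by simp⟩, ?_, rfl⟩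
    have : (∫ z in K, eval z ((C a : MvPolynomial (Fin m) ℝ) ^ 2) ∂μ)
        = (μ K).toReal * a ^ 2 := by
      simp only [map_pow, eval_C]
      rw [integral_const]
      simp [Measure.restrict_apply_univ, smul_eq_mul, measureReal_def]
    rw [this, ha2, mul_inv_cancel₀ hμK_toReal.ne']
  -- monotonicity
  have hmono : Monotone fK := by
    intro r r' hrr
    rw [hfK' r, hfK' r']
    refine csSup_le_csSup (hbdd r') (hSne r) ?_
    rintro v ⟨h, hh, hnorm, rfl⟩
    exact ⟨h, isSOS_mono' hrr hh, hnorm, rfl⟩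
  have hfK_le : ∀ r, fK r ≤ M := fun r => by
    rw [hfK' r]; exact csSup_le (hSne r) (hub r)
  -- the lower bound: for every ε > 0 there is r with M - ε ≤ fK r
  have hlow : ∀ ε : ℝ, 0 < ε → ∃ r : ℕ, M - ε ≤ fK r := by
    intro ε hε
    -- shifted polynomial p with eval ≥ 1 on K
    obtain ⟨z1, hz1K, hz1min⟩ := hK.exists_isMinOn hKne hFc.continuousOn
    set k : ℝ := 1 - F z1 with hkdef
    set p : MvPolynomial (Fin m) ℝ := f + C k with hpdef
    set g : (Fin m → ℝ) → ℝ := fun z => eval z p with hgdef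
    have hgF : ∀ z, g z = F z + k := by intro z; simp [hgdef, hpdef, hFdef]
    have hgc : Continuous g := MvPolynomial.continuous_eval p
    have hg1 : ∀ z ∈ K, 1 ≤ g z := by
      intro z hz
      have h1 : F z1 ≤ F z := hz1min hz
      rw [hgF]
      simp only [hkdef]
      linarith
    have hg0 : ∀ z ∈ K, 0 ≤ g z := fun z hz => le_trans zero_le_one (hg1 z hz)
    set Mg : ℝ := M + k with hMgdef
    have hgle : ∀ z ∈ K, g z ≤ Mg := by
      intro z hz; rw [hgF, hMgdef]; linarith [hle z hz]
    have hgz0 : g z0 = Mg := by rw [hgF, hMgdef]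
    have hMg1 : 1 ≤ Mg := hgz0 ▸ hg1 z0 hz0K
    -- integrals of powers of g over K
    set I : ℕ → ℝ := fun n => ∫ z in K, (g z) ^ n ∂μ with hIdef
    have hintn : ∀ n : ℕ, IntegrableOn (fun z => (g z) ^ n) K μ := by
      intro n
      have := hint (p ^ n)
      simpa only [map_pow] using this
    have hIpos : ∀ n, 0 < I n := by
      intro n
      have h1 : (μ K).toReal * 1 ≤ I n := by
        have := setIntegral_mono_on (integrableOn_const)
          (hintn n) hK.measurableSet (fun z hz => one_le_pow₀ (hg1 z hz))
        simpa [setIntegral_const, smul_eq_mul, measureReal_def] using this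
      linarith [hμK_toReal]
    -- the key concentration inequality
    have hkey : ∃ r : ℕ, (Mg - ε) * I (2 * r) ≤ I (2 * r + 1) := by
      by_cases hcase : Mg - ε ≤ 1
      · refine ⟨0, ?_⟩
        calc (Mg - ε) * I (2 * 0) ≤ 1 * I (2 * 0) :=
              mul_le_mul_of_nonneg_right hcase (hIpos _).le
          _ = I (2 * 0) := one_mul _
          _ ≤ I (2 * 0 + 1) := by
              refine setIntegral_mono_on (hintn _) (hintn _) hK.measurableSet ?_
              intro z hz
              exact pow_le_pow_right₀ (hg1 z hz) (Nat.le_succ _)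
      · push_neg at hcase
        set δ : ℝ := ε / 2 with hδdef
        have hδpos : 0 < δ := by positivity
        have hδlt : δ < ε := by simp [hδdef]; linarith
        have h1lt : (1 : ℝ) < Mg - δ := by
          have : Mg - ε < Mg - δ := by linarith
          linarith
        -- sets
        set B : Set (Fin m → ℝ) := K ∩ {z | Mg - δ ≤ g z} with hBdef
        have hBmeas : MeasurableSet B :=
          hK.measurableSet.inter (measurableSet_le measurable_const hgc.measurable)
        set U : Set (Fin m → ℝ) := g ⁻¹' (Set.Ioi (Mg - δ / 2)) with hUdef
        have hUopen : IsOpen U := isOpen_Ioi.preimage hgc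
        have hz0U : z0 ∈ U := by
          simp only [hUdef, Set.mem_preimage, Set.mem_Ioi, hgz0]
          linarith
        have hμU : 0 < μ (U ∩ K) := by
          rw [hμeq U]
          exact hsupp.2 U hUopen ⟨z0, hz0U, hz0K⟩
        have hμU_toReal : 0 < (μ (U ∩ K)).toReal :=
          ENNReal.toReal_pos hμU.ne' (measure_ne_top μ _)
        have hUB : U ∩ K ⊆ B := by
          rintro z ⟨hzU, hzK⟩
          refine ⟨hzK, ?_⟩
          have : Mg - δ / 2 < g z := hzU
          simp only [Set.mem_setOf_eq]
          linarith
        -- ratio ρ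
        set ρ : ℝ := (Mg - δ) / (Mg - δ / 2) with hρdef
        have hden : (0 : ℝ) < Mg - δ / 2 := by linarith
        have hρ0 : 0 ≤ ρ := by positivity
        have hρ1 : ρ < 1 := by
          rw [hρdef, div_lt_one hden]; linarith
        have htend : Filter.Tendsto (fun n : ℕ => (Mg - ε - 1) * (μ K).toReal * ρ ^ n)
            Filter.atTop (nhds 0) := by
          have := (tendsto_pow_atTop_nhds_zero_of_lt_one hρ0 hρ1).const_mul
            ((Mg - ε - 1) * (μ K).toReal)
          simpa using this
        have hpos : 0 < δ * (μ (U ∩ K)).toReal := by positivity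
        obtain ⟨N, hN⟩ := Filter.eventually_atTop.1 (htend.eventually_lt_const hpos)
        refine ⟨N, ?_⟩
        set n : ℕ := 2 * N with hndef
        have hNn : N ≤ n := by omega
        have hneven : Even n := ⟨N, by omega⟩
        have hgnn : ∀ z, 0 ≤ g z ^ n := fun z => hneven.pow_nonneg _
        set T : Set (Fin m → ℝ) := {z | Mg - δ ≤ g z} with hTdef
        have hTmeas : MeasurableSet T := measurableSet_le measurable_const hgc.measurable
        set J : ℝ := ∫ z in K ∩ T, g z ^ n ∂μ with hJdef
        set L : ℝ := ∫ z in K \ T, g z ^ n ∂μ with hLdef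
        have hsplit : J + L = I n := integral_inter_add_diff hTmeas (hintn n)
        -- I (n+1) ≥ (Mg - δ) * J + L
        have hIn1 : (Mg - δ) * J + L ≤ I (n + 1) := by
          have hs1 : (Mg - δ) * J ≤ ∫ z in K ∩ T, g z ^ (n + 1) ∂μ := by
            rw [hJdef, ← integral_const_mul]
            refine setIntegral_mono_on (((hintn n).mono_set Set.inter_subset_left).const_mul _)
              ((hintn (n+1)).mono_set Set.inter_subset_left)
              (hK.measurableSet.inter hTmeas) ?_
            rintro z ⟨hzK, hzT⟩
            rw [pow_succ, mul_comm (g z ^ n) (g z)]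
            exact mul_le_mul_of_nonneg_right hzT (hgnn z)
          have hs2 : L ≤ ∫ z in K \ T, g z ^ (n + 1) ∂μ := by
            refine setIntegral_mono_on ((hintn n).mono_set Set.diff_subset)
              ((hintn (n+1)).mono_set Set.diff_subset)
              (hK.measurableSet.diff hTmeas) ?_
            rintro z ⟨hzK, -⟩
            exact pow_le_pow_right₀ (hg1 z hzK) (Nat.le_succ n)
          have := integral_inter_add_diff hTmeas (hintn (n+1))
          rw [hIdef]
          dsimp only
          rw [← this]
          exact add_le_add hs1 hs2
        -- lower bound for J
        have hJge : (Mg - δ / 2) ^ n * (μ (U ∩ K)).toReal ≤ J := by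
          have hsub : ∫ z in U ∩ K, g z ^ n ∂μ ≤ J := by
            refine setIntegral_mono_set ((hintn n).mono_set Set.inter_subset_left)
              (Filter.Eventually.of_forall hgnn) ?_
            exact Filter.Eventually.of_forall (fun z hz => ⟨hz.2, (hUB hz).2⟩)
          refine le_trans ?_ hsub
          have hconst : ∫ _ in U ∩ K, (Mg - δ / 2) ^ n ∂μ
              = (μ (U ∩ K)).toReal * (Mg - δ / 2) ^ n := by
            rw [setIntegral_const, smul_eq_mul, measureReal_def]
          rw [mul_comm, ← hconst]
          refine setIntegral_mono_on (integrableOn_const)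
            ((hintn n).mono_set Set.inter_subset_right)
            (hUopen.measurableSet.inter hK.measurableSet) ?_
          rintro z ⟨hzU, hzK⟩
          exact pow_le_pow_left₀ hden.le (le_of_lt hzU) n
        have hJ0 : 0 ≤ J := setIntegral_nonneg (hK.measurableSet.inter hTmeas)
          (fun z _ => hgnn z)
        -- upper bound for L
        have hLle : L ≤ (Mg - δ) ^ n * (μ K).toReal := by
          have h1 : L ≤ ∫ _ in K \ T, (Mg - δ) ^ n ∂μ := by
            refine setIntegral_mono_on ((hintn n).mono_set Set.diff_subset)
              (integrableOn_const)
              (hK.measurableSet.diff hTmeas) ?_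
            rintro z ⟨hzK, hzT⟩
            simp only [hTdef, Set.mem_setOf_eq, not_le] at hzT
            exact pow_le_pow_left₀ (hg0 z hzK) hzT.le n
          have h2 : ∫ _ in K \ T, (Mg - δ) ^ n ∂μ
              = (μ (K \ T)).toReal * (Mg - δ) ^ n := by
            rw [setIntegral_const, smul_eq_mul, measureReal_def]
          have h3 : (μ (K \ T)).toReal ≤ (μ K).toReal :=
            ENNReal.toReal_mono (measure_ne_top μ K) (measure_mono Set.diff_subset)
          have h4 : (0:ℝ) ≤ (Mg - δ) ^ n := by positivity
          calc L ≤ (μ (K \ T)).toReal * (Mg - δ) ^ n := by rw [← h2]; exact h1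
            _ ≤ (μ K).toReal * (Mg - δ) ^ n := mul_le_mul_of_nonneg_right h3 h4
            _ = (Mg - δ) ^ n * (μ K).toReal := mul_comm _ _
        -- combine
        have hρn : ρ ^ n * (Mg - δ / 2) ^ n = (Mg - δ) ^ n := by
          rw [← mul_pow, hρdef, div_mul_cancel₀ _ hden.ne']
        have hN' : (Mg - ε - 1) * (μ K).toReal * ρ ^ n < δ * (μ (U ∩ K)).toReal := hN n hNn
        have hkey2 : (Mg - ε - 1) * L ≤ δ * J := by
          have c1 : (Mg - ε - 1) * L ≤ (Mg - ε - 1) * ((Mg - δ) ^ n * (μ K).toReal) :=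
            mul_le_mul_of_nonneg_left hLle (by linarith)
          have c2 : (Mg - ε - 1) * ((Mg - δ) ^ n * (μ K).toReal)
              = ((Mg - ε - 1) * (μ K).toReal * ρ ^ n) * (Mg - δ / 2) ^ n := by
            rw [← hρn]; ring
          have hpow : (0:ℝ) < (Mg - δ / 2) ^ n := by positivity
          have c3 : ((Mg - ε - 1) * (μ K).toReal * ρ ^ n) * (Mg - δ / 2) ^ n
              ≤ (δ * (μ (U ∩ K)).toReal) * (Mg - δ / 2) ^ n :=
            mul_le_mul_of_nonneg_right hN'.le hpow.le
          have c4 : (δ * (μ (U ∩ K)).toReal) * (Mg - δ / 2) ^ n ≤ δ * J := by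
            have := mul_le_mul_of_nonneg_left hJge hδpos.le
            calc (δ * (μ (U ∩ K)).toReal) * (Mg - δ / 2) ^ n
                = δ * ((Mg - δ / 2) ^ n * (μ (U ∩ K)).toReal) := by ring
              _ ≤ δ * J := this
          calc (Mg - ε - 1) * L ≤ (Mg - ε - 1) * ((Mg - δ) ^ n * (μ K).toReal) := c1
            _ = (Mg - ε - 1) * (μ K).toReal * ρ ^ n * (Mg - δ / 2) ^ n := c2
            _ ≤ δ * (μ (U ∩ K)).toReal * (Mg - δ / 2) ^ n := c3
            _ ≤ δ * J := c4
        have hεδ : ε = 2 * δ := by rw [hδdef]; ring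
        have hkey2' : (Mg - 2 * δ - 1) * L ≤ δ * J := by rw [← hεδ]; exact hkey2
        calc (Mg - ε) * I n = (Mg - 2 * δ) * (J + L) := by rw [hsplit, hεδ]
          _ ≤ (Mg - δ) * J + L := by nlinarith [hkey2', mul_nonneg hδpos.le hJ0]
          _ ≤ I (n + 1) := hIn1
    -- construct the SOS density from hkey
    obtain ⟨r, hr⟩ := hkey
    have hI2pos := hIpos (2 * r)
    set a : ℝ := Real.sqrt (I (2 * r))⁻¹ with hadef
    have ha2 : a ^ 2 = (I (2 * r))⁻¹ := Real.sq_sqrt (inv_nonneg.2 hI2pos.le)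
    set q0 : MvPolynomial (Fin m) ℝ := C a * p ^ r with hq0
    set hden : MvPolynomial (Fin m) ℝ := q0 ^ 2 with hhden
    have hevalh : ∀ z, eval z hden = a ^ 2 * (g z) ^ (2 * r) := by
      intro z
      simp only [hhden, hq0, map_pow, map_mul, eval_C]
      rw [mul_pow, ← pow_mul, mul_comm r 2]
    have hSOS : IsSOS (r * p.totalDegree) hden := by
      refine ⟨1, fun _ => q0, by simp [hhden], fun j => ?_⟩
      calc q0.totalDegree ≤ (C a).totalDegree + (p ^ r).totalDegree := totalDegree_mul _ _
        _ ≤ 0 + r * p.totalDegree := add_le_add (le_of_eq (totalDegree_C a))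
            (totalDegree_pow p r)
        _ = r * p.totalDegree := zero_add _
    have hnorm : (∫ z in K, eval z hden ∂μ) = 1 := by
      simp only [hevalh]
      rw [integral_const_mul, ha2]
      exact inv_mul_cancel₀ hI2pos.ne'
    have hFg : (∫ z in K, eval z f * (g z) ^ (2 * r) ∂μ)
        = I (2 * r + 1) - k * I (2 * r) := by
      have hptw : ∀ z, eval z f * (g z) ^ (2 * r)
          = g z ^ (2 * r + 1) - k * g z ^ (2 * r) := by
        intro z
        have h1 : (eval z f : ℝ) = g z - k := by rw [hgF z]; ring
        rw [h1, pow_succ]; ring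
      simp only [hptw]
      rw [integral_sub (hintn (2 * r + 1)) ((hintn (2 * r)).const_mul k),
        integral_const_mul]
    have hInt : (∫ z in K, eval z f * eval z hden ∂μ)
        = a ^ 2 * (I (2 * r + 1) - k * I (2 * r)) := by
      have hrw : ∀ z, eval z f * eval z hden = a ^ 2 * (eval z f * (g z) ^ (2 * r)) := by
        intro z; rw [hevalh]; ring
      simp only [hrw]
      rw [integral_const_mul, hFg]
    have hfinal : M - ε ≤ ∫ z in K, eval z f * eval z hden ∂μ := by
      rw [hInt]
      have key : a ^ 2 * ((Mg - ε) * I (2 * r) - k * I (2 * r)) = M - ε := by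
        rw [ha2, hMgdef]
        field_simp
        ring
      calc M - ε = a ^ 2 * ((Mg - ε) * I (2 * r) - k * I (2 * r)) := key.symm
        _ ≤ a ^ 2 * (I (2 * r + 1) - k * I (2 * r)) := by
            refine mul_le_mul_of_nonneg_left ?_ (sq_nonneg a)
            linarith
    refine ⟨r * p.totalDegree, ?_⟩
    have hmem : (∫ z in K, eval z f * eval z hden ∂μ) ∈ S (r * p.totalDegree) :=
      ⟨hden, hSOS, hnorm, rfl⟩
    have := le_csSup (hbdd (r * p.totalDegree)) hmem
    rw [hfK' (r * p.totalDegree)]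
    linarith
  -- conclude
  have hbddR : BddAbove (Set.range fK) := ⟨M, by rintro _ ⟨r, rfl⟩; exact hfK_le r⟩
  have htendsto := tendsto_atTop_ciSup hmono hbddR
  have hiSup : (⨆ r, fK r) = M := by
    apply le_antisymm (ciSup_le hfK_le)
    by_contra hlt
    push_neg at hlt
    obtain ⟨r, hr⟩ := hlow ((M - ⨆ r, fK r) / 2) (by linarith)
    have : fK r ≤ ⨆ r, fK r := le_ciSup hbddR r
    linarith
  rwa [hiSup] at htendsto
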